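/- Let $Q$ be a semiprimary ring. Then $Q$ satisfies the descending chain condition on finitely generated right ideals; in particular, $Q$ has a simple right ideal. -/

import Mathlib

open MulOpposite

section Opp
variable {R : Type*} [Ring R]

/-- right principal ideal -/
def rsp (a : R) : Submodule Rᵐᵒᵖ R := Submodule.span Rᵐᵒᵖ {a}

lemma mem_rsp {a x : R} : x ∈ rsp a ↔ ∃ r : R, a * r = x := by
  rw [rsp, Submodule.mem_span_singleton]
  constructor
  · rintro ⟨c, rfl⟩; exact ⟨c.unop, rfl⟩
  · rintro ⟨r, rfl⟩; exact ⟨op r, rfl⟩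

lemma rsp_le {a : R} {I : Submodule Rᵐᵒᵖ R} (h : a ∈ I) : rsp a ≤ I :=
  Submodule.span_le.mpr (by simpa using h)

lemma self_mem_rsp (a : R) : a ∈ rsp a := Submodule.mem_span_singleton_self a

variable [IsSemisimpleRing R]

lemma ssregular (a : R) : ∃ x : R, a * x * a = a := by
  obtain ⟨q, hq⟩ := exists_isCompl (Submodule.span R {a} : Submodule R R)
  set p := Submodule.span R {a} with hp
  have ha : a ∈ p := Submodule.mem_span_singleton_self a
  set π := Submodule.linearProjOfIsCompl p q hq with hπ
  have h1 : (π 1 : R) ∈ p := (π 1).2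
  obtain ⟨x, hx⟩ := Submodule.mem_span_singleton.mp h1
  have h2 : π a = ⟨a, ha⟩ := Submodule.linearProjOfIsCompl_apply_left hq ⟨a, ha⟩
  have h3 : π a = a • π 1 := by
    conv_lhs => rw [show a = a • (1 : R) from (mul_one a).symm]
    rw [map_smul]
  have h4 : a = a • (π 1 : R) := by
    have := congrArg (Subtype.val) (h2.symm.trans h3)
    simpa using this
  refine ⟨x, ?_⟩
  rw [← hx] at h4
  rw [mul_assoc]
  simpa [smul_eq_mul] using h4.symm

lemma rsp_idem (a : R) : ∃ e : R, IsIdempotentElem e ∧ rsp a = rsp e := by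
  obtain ⟨x, hx⟩ := ssregular a
  refine ⟨a * x, ?_, le_antisymm ?_ ?_⟩
  · show a * x * (a * x) = a * x
    rw [← mul_assoc, hx]
  · apply rsp_le
    exact mem_rsp.mpr ⟨a, hx⟩
  · apply rsp_le
    exact mem_rsp.mpr ⟨x, rfl⟩

lemma rsp_sup {e f : R} (he : IsIdempotentElem e) (_hf : IsIdempotentElem f) :
    ∃ h : R, IsIdempotentElem h ∧ rsp e ⊔ rsp f = rsp h := by
  classical
  set c := f - e * f with hc
  obtain ⟨g, hg, hcg⟩ := rsp_idem c
  have hec : e * c = 0 := by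
    rw [hc, mul_sub, ← mul_assoc, he.eq, sub_self]
  have heg : e * g = 0 := by
    obtain ⟨r, hr⟩ := mem_rsp.mp (hcg ▸ self_mem_rsp g)
    rw [← hr, ← mul_assoc, hec, zero_mul]
  have h1 : (e + g - g * e) * e = e := by
    rw [sub_mul, add_mul, he.eq, mul_assoc, he.eq, add_sub_cancel_right]
  have h2 : (e + g - g * e) * g = g := by
    have hgeg : g * e * g = 0 := by rw [mul_assoc, heg, mul_zero]
    rw [sub_mul, add_mul, hg.eq, heg, zero_add, hgeg, sub_zero]
  refine ⟨e + g - g * e, ?_, ?_⟩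
  · show (e + g - g * e) * (e + g - g * e) = _
    rw [mul_sub, mul_add, h1, h2, ← mul_assoc, h2]
  · have hsup : rsp e ⊔ rsp f = rsp e ⊔ rsp c := by
      apply le_antisymm
      · refine sup_le le_sup_left (rsp_le ?_)
        have hf2 : f = e * f + c := by rw [hc]; noncomm_ring
        rw [hf2]
        exact Submodule.add_mem _ (Submodule.mem_sup_left (mem_rsp.mpr ⟨f, rfl⟩))
          (Submodule.mem_sup_right (self_mem_rsp c))
      · refine sup_le le_sup_left (rsp_le ?_)
        rw [hc]
        exact Submodule.sub_mem _ (Submodule.mem_sup_right (self_mem_rsp f))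
          (Submodule.mem_sup_left (mem_rsp.mpr ⟨f, rfl⟩))
    rw [hsup, hcg]
    apply le_antisymm
    · exact sup_le (rsp_le (mem_rsp.mpr ⟨e, h1⟩)) (rsp_le (mem_rsp.mpr ⟨g, h2⟩))
    · apply rsp_le
      have : e + g - g * e = e * 1 + g * (1 - e) := by noncomm_ring
      rw [this]
      exact Submodule.add_mem _ (Submodule.mem_sup_left (mem_rsp.mpr ⟨1, rfl⟩))
        (Submodule.mem_sup_right (mem_rsp.mpr ⟨1 - e, rfl⟩))

/-- left annihilator of an element, as a left ideal -/
def lannI (e : R) : Ideal R where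
  carrier := {x | x * e = 0}
  add_mem' := by intro a b ha hb; simp only [Set.mem_setOf_eq] at *; rw [add_mul, ha, hb, add_zero]
  zero_mem' := by simp
  smul_mem' := by intro c x hx; simp only [Set.mem_setOf_eq, smul_eq_mul] at *
                  rw [mul_assoc, hx, mul_zero]

lemma right_ideal_eq_rsp_idem (I : Submodule Rᵐᵒᵖ R) :
    ∃ e : R, IsIdempotentElem e ∧ I = rsp e := by
  classical
  set S : Set (Ideal R) := {L | ∃ e : R, IsIdempotentElem e ∧ e ∈ I ∧ L = lannI e} with hS
  have hSne : S.Nonempty := ⟨lannI 0, 0, by simp [IsIdempotentElem], Submodule.zero_mem I, rfl⟩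
  obtain ⟨L₀, ⟨e₀, he₀, he₀I, rfl⟩, hmin⟩ := IsArtinian.set_has_minimal S hSne
  refine ⟨e₀, he₀, le_antisymm ?_ (rsp_le he₀I)⟩
  intro a ha
  obtain ⟨e₁, he₁, hae₁⟩ := rsp_idem a
  have he₁I : e₁ ∈ I := rsp_le ha (hae₁ ▸ self_mem_rsp e₁)
  obtain ⟨h, hh, hsup⟩ := rsp_sup he₀ he₁
  have hhI : h ∈ I := by
    have : rsp h ≤ I := hsup ▸ sup_le (rsp_le he₀I) (rsp_le he₁I)
    exact this (self_mem_rsp h)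
  have hle : lannI h ≤ lannI e₀ := by
    intro x hx
    obtain ⟨r, hr⟩ := mem_rsp.mp (hsup ▸ (Submodule.mem_sup_left (self_mem_rsp e₀) :
      e₀ ∈ rsp e₀ ⊔ rsp e₁))
    show x * e₀ = 0
    have hx' : x * h = 0 := hx
    rw [← hr, ← mul_assoc, hx', zero_mul]
  have heq : lannI h = lannI e₀ := by
    by_contra hne
    exact hmin (lannI h) ⟨h, hh, hhI, rfl⟩ (lt_of_le_of_ne hle hne)
  have h1 : (1 - e₀) * e₀ = 0 := by rw [sub_mul, one_mul, he₀.eq, sub_self]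
  have h2 : (1 - e₀) * h = 0 := by
    have : (1 - e₀) ∈ lannI h := heq ▸ (h1 : (1 - e₀) ∈ lannI e₀)
    exact this
  have hhe : h = e₀ * h := by
    rw [sub_mul, one_mul] at h2
    exact (sub_eq_zero.mp h2)
  have hah : a ∈ rsp h := by
    rw [← hsup]
    exact Submodule.mem_sup_right (hae₁ ▸ self_mem_rsp a)
  obtain ⟨r, hr⟩ := mem_rsp.mp hah
  exact mem_rsp.mpr ⟨h * r, by rw [← mul_assoc, ← hhe, hr]⟩

lemma complemented_right : ComplementedLattice (Submodule Rᵐᵒᵖ R) := by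
  constructor
  intro I
  obtain ⟨e, he, rfl⟩ := right_ideal_eq_rsp_idem I
  refine ⟨rsp (1 - e), ?_, ?_⟩
  · rw [disjoint_iff]
    ext x
    simp only [Submodule.mem_inf, Submodule.mem_bot]
    constructor
    · rintro ⟨h1, h2⟩
      obtain ⟨r, hr⟩ := mem_rsp.mp h1
      obtain ⟨s, hs⟩ := mem_rsp.mp h2
      have hex : e * x = x := by rw [← hr, ← mul_assoc, he.eq]
      have hex0 : e * x = 0 := by rw [← hs, ← mul_assoc, mul_sub, mul_one, he.eq, sub_self,
        zero_mul]
      rw [← hex, hex0]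
    · rintro rfl; exact ⟨Submodule.zero_mem _, Submodule.zero_mem _⟩
  · rw [codisjoint_iff, eq_top_iff]
    intro x _
    have hx : x = e * x + (1 - e) * x := by noncomm_ring
    rw [hx]
    exact Submodule.add_mem _ (Submodule.mem_sup_left (mem_rsp.mpr ⟨x, rfl⟩))
      (Submodule.mem_sup_right (mem_rsp.mpr ⟨x, rfl⟩))

def opEquivR : R ≃ₗ[Rᵐᵒᵖ] Rᵐᵒᵖ where
  toFun := op
  invFun := unop
  map_add' := by intro a b; simp
  map_smul' := by intro c x; rfl
  left_inv := fun x => rfl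
  right_inv := fun x => rfl

theorem isSemisimpleRing_mop : IsSemisimpleRing Rᵐᵒᵖ := by
  have : IsSemisimpleModule Rᵐᵒᵖ R := { toComplementedLattice := complemented_right }
  exact IsSemisimpleModule.congr ((opEquivR : R ≃ₗ[Rᵐᵒᵖ] Rᵐᵒᵖ).symm)

end Opp

section Semiprimary

open Submodule

variable {Q : Type*} [Ring Q] (J : TwoSidedIdeal Q)

/-- products of `m` elements of `J` -/
def prodSetJ (m : ℕ) : Set Q :=
  {z | ∃ x : Fin m → Q, (∀ i, x i ∈ J) ∧ (List.ofFn x).prod = z}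

/-- the right ideal spanned by products of `m` elements of `J` -/
def KpowJ (m : ℕ) : Submodule Qᵐᵒᵖ Q := Submodule.span Qᵐᵒᵖ (prodSetJ J m)

lemma KpowJ_zero : KpowJ J 0 = ⊤ := by
  have h1 : (1 : Q) ∈ KpowJ J 0 :=
    Submodule.subset_span ⟨Fin.elim0, fun i => i.elim0, by simp⟩
  rw [eq_top_iff]
  intro q _
  have : q = op q • (1 : Q) := by rw [op_smul_eq_mul, one_mul]
  rw [this]
  exact Submodule.smul_mem _ _ h1

lemma mul_mem_KpowJ {m : ℕ} {x : Q} (hx : x ∈ KpowJ J m) {y : Q} (hy : y ∈ J) :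
    x * y ∈ KpowJ J (m + 1) := by
  have key : ∀ y ∈ J, x * y ∈ KpowJ J (m + 1) := by
    refine Submodule.span_induction (p := fun x _ => ∀ y ∈ J, x * y ∈ KpowJ J (m + 1))
      ?_ ?_ ?_ ?_ hx
    · rintro z ⟨w, hw, rfl⟩ y hy
      refine Submodule.subset_span ⟨Fin.snoc w y, ?_, ?_⟩
      · intro i
        refine Fin.lastCases ?_ ?_ i
        · rw [Fin.snoc_last]; exact hy
        · intro j; rw [Fin.snoc_castSucc]; exact hw j
      · have hfn : List.ofFn (Fin.snoc w y) = (List.ofFn w).concat y := by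
          rw [List.ofFn_succ']
          congr 1
          · congr 1
            funext i
            simp
          · simp
        rw [hfn, List.prod_concat]
    · intro y _; rw [zero_mul]; exact Submodule.zero_mem _
    · intro a b _ _ ha hb y hy
      rw [add_mul]
      exact Submodule.add_mem _ (ha y hy) (hb y hy)
    · intro c a _ ha y hy
      rw [MulOpposite.smul_eq_mul_unop, mul_assoc]
      exact ha _ (J.mul_mem_left _ _ hy)
  exact key y hy

lemma KpowJ_eq_bot {n : ℕ}
    (hn : ∀ x : Fin n → Q, (∀ i, x i ∈ J) → (List.ofFn x).prod = 0) :
    KpowJ J n = ⊥ := by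
  rw [eq_bot_iff, KpowJ]
  apply Submodule.span_le.mpr
  rintro z ⟨w, hw, rfl⟩
  simp [hn w hw]

/-- the right ideal `I·J` -/
def mulJ (I : Submodule Qᵐᵒᵖ Q) : Submodule Qᵐᵒᵖ Q :=
  Submodule.span Qᵐᵒᵖ {z | ∃ x ∈ I, ∃ y ∈ J, z = x * y}

lemma mulJ_le (I : Submodule Qᵐᵒᵖ Q) : mulJ J I ≤ I := by
  apply Submodule.span_le.mpr
  rintro z ⟨x, hx, y, hy, rfl⟩
  exact Submodule.smul_mem I (op y) hx

lemma mem_mulJ {I : Submodule Qᵐᵒᵖ Q} {x y : Q} (hx : x ∈ I) (hy : y ∈ J) :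
    x * y ∈ mulJ J I := Submodule.subset_span ⟨x, hx, y, hy, rfl⟩

section KilledModule

variable {M : Type*} [AddCommGroup M] [Module Qᵐᵒᵖ M]

lemma artinian_of_killed (hss : IsSemisimpleRing J.ringCon.Quotient)
    (hann : ∀ y ∈ J, ∀ x : M, op y • x = 0) (hfin : Module.Finite Qᵐᵒᵖ M) :
    IsArtinian Qᵐᵒᵖ M := by
  set R := J.ringCon.Quotient with hR
  have qrep : ∀ r : Rᵐᵒᵖ, ∃ q : Q, r = op ((q : Q) : R) := by
    intro r
    obtain ⟨q, hq⟩ := Quotient.exists_rep r.unop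
    exact ⟨q, by rw [← op_unop r, ← hq]; rfl⟩
  letI : SMul Rᵐᵒᵖ M :=
    ⟨fun r x => Quotient.liftOn r.unop (fun q => op q • x) (fun a b hab => by
      have hmem : a - b ∈ J := (J.rel_iff a b).mp hab
      have h0 : op (a - b) • x = 0 := hann _ hmem x
      have h1 : op a • x - op b • x = 0 := by
        rw [← sub_smul, ← MulOpposite.op_sub]; exact h0
      exact sub_eq_zero.mp h1)⟩
  have smk : ∀ (q : Q) (x : M), (op ((q : Q) : R)) • x = op q • x := fun _ _ => rfl
  letI : MulAction Rᵐᵒᵖ M :=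
    { one_smul := by
        intro x
        have h1 : (1 : Rᵐᵒᵖ) = op (((1 : Q) : Q) : R) := rfl
        rw [h1, smk, MulOpposite.op_one, one_smul]
      mul_smul := by
        intro r s x
        obtain ⟨a, rfl⟩ := qrep r
        obtain ⟨b, rfl⟩ := qrep s
        have h1 : (op ((a : Q) : R)) * op ((b : Q) : R) = op (((b * a : Q) : Q) : R) := rfl
        rw [h1, smk, smk, smk, MulOpposite.op_mul, mul_smul] }
  letI : DistribMulAction Rᵐᵒᵖ M :=
    { smul_zero := by
        intro r
        obtain ⟨a, rfl⟩ := qrep r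
        rw [smk, smul_zero]
      smul_add := by
        intro r x y
        obtain ⟨a, rfl⟩ := qrep r
        rw [smk, smk, smk, smul_add] }
  letI : Module Rᵐᵒᵖ M :=
    { add_smul := by
        intro r s x
        obtain ⟨a, rfl⟩ := qrep r
        obtain ⟨b, rfl⟩ := qrep s
        have h1 : (op ((a : Q) : R)) + op ((b : Q) : R) = op (((a + b : Q) : Q) : R) := rfl
        rw [h1, smk, smk, smk, MulOpposite.op_add, add_smul]
      zero_smul := by
        intro x
        have h1 : (0 : Rᵐᵒᵖ) = op (((0 : Q) : Q) : R) := rfl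
        rw [h1, smk, MulOpposite.op_zero, zero_smul] }
  haveI : IsSemisimpleRing Rᵐᵒᵖ := isSemisimpleRing_mop
  haveI : Module.Finite Rᵐᵒᵖ M := by
    obtain ⟨s, hs⟩ := hfin.fg_top
    refine ⟨⟨s, ?_⟩⟩
    rw [eq_top_iff]
    intro x _
    have hx : x ∈ Submodule.span Qᵐᵒᵖ (s : Set M) := hs ▸ Submodule.mem_top
    refine Submodule.span_induction (p := fun x _ => x ∈ Submodule.span Rᵐᵒᵖ (s : Set M))
      ?_ ?_ ?_ ?_ hx
    · exact fun y hy => Submodule.subset_span hy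
    · exact Submodule.zero_mem _
    · exact fun a b _ _ ha hb => Submodule.add_mem _ ha hb
    · intro c a _ ha
      have : c • a = op ((c.unop : Q) : R) • a := by
        rw [smk, op_unop]
      rw [this]
      exact Submodule.smul_mem _ _ ha
  haveI hart : IsArtinian Rᵐᵒᵖ M := inferInstance
  rw [← monotone_stabilizes_iff_artinian]
  intro f
  let ext : Submodule Qᵐᵒᵖ M → Submodule Rᵐᵒᵖ M := fun N =>
    { carrier := N
      add_mem' := fun ha hb => N.add_mem ha hb
      zero_mem' := N.zero_mem
      smul_mem' := by
        intro c x hx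
        obtain ⟨a, rfl⟩ := qrep c
        rw [smk]
        exact N.smul_mem _ hx }
  let g : ℕ →o (Submodule Rᵐᵒᵖ M)ᵒᵈ :=
    ⟨fun k => ext (f k), by
      intro k l hkl
      exact fun x hx => (f.mono hkl : OrderDual.ofDual (f l) ≤ OrderDual.ofDual (f k)) hx⟩
  obtain ⟨N, hN⟩ := IsArtinian.monotone_stabilizes g
  refine ⟨N, fun m hm => ?_⟩
  have h5 : ext (OrderDual.ofDual (f N)) = ext (OrderDual.ofDual (f m)) := hN m hm
  have h6 : ((ext (OrderDual.ofDual (f N)) : Submodule Rᵐᵒᵖ M) : Set M) =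
      ((ext (OrderDual.ofDual (f m)) : Submodule Rᵐᵒᵖ M) : Set M) := congrArg SetLike.coe h5
  have h7 : ((OrderDual.ofDual (f N) : Submodule Qᵐᵒᵖ M) : Set M) =
      ((OrderDual.ofDual (f m) : Submodule Qᵐᵒᵖ M) : Set M) := h6
  have h8 : OrderDual.ofDual (f N) = OrderDual.ofDual (f m) := SetLike.ext' h7
  exact h8

end KilledModule

end Semiprimary

section Stab

open Submodule

variable {Q : Type*} [Ring Q] (J : TwoSidedIdeal Q)

lemma stab_chain (hss : IsSemisimpleRing J.ringCon.Quotient)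
    (A B If : Submodule Qᵐᵒᵖ Q) (hfg : If.FG) (hIA : If ≤ A)
    (hsup : A ≤ If ⊔ B) (hJann : ∀ x ∈ A, ∀ y ∈ J, x * y ∈ B)
    (g : ℕ → Submodule Qᵐᵒᵖ Q) (hga : Antitone g)
    (hg1 : ∀ k, B ≤ g k) (hg2 : ∀ k, g k ≤ A) :
    ∃ N, ∀ k, N ≤ k → g k = g N := by
  set B' : Submodule Qᵐᵒᵖ A := Submodule.comap A.subtype B with hB'
  haveI hart : IsArtinian Qᵐᵒᵖ (A ⧸ B') := by
    apply artinian_of_killed J hss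
    · intro y hy x
      obtain ⟨⟨a, haA⟩, rfl⟩ := Submodule.Quotient.mk_surjective B' x
      rw [← Submodule.Quotient.mk_smul, Submodule.Quotient.mk_eq_zero]
      have h1 : ((op y • (⟨a, haA⟩ : A) : A) : Q) ∈ B := by
        simpa [op_smul_eq_mul] using hJann a haA y hy
      exact h1
    · haveI : Module.Finite Qᵐᵒᵖ If := Module.Finite.iff_fg.mpr hfg
      let fmap : If →ₗ[Qᵐᵒᵖ] A ⧸ B' := (B'.mkQ).comp (Submodule.inclusion hIA)
      apply Module.Finite.of_surjective fmap
      intro x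
      obtain ⟨⟨a, haA⟩, rfl⟩ := Submodule.Quotient.mk_surjective B' x
      obtain ⟨i, hi, b, hb, hib⟩ := Submodule.mem_sup.mp (hsup haA)
      refine ⟨⟨i, hi⟩, ?_⟩
      have h1 : fmap ⟨i, hi⟩ = Submodule.Quotient.mk (⟨i, hIA hi⟩ : A) := rfl
      rw [h1, Submodule.Quotient.eq]
      have hv : (((⟨i, hIA hi⟩ : A) - ⟨a, haA⟩ : A) : Q) = -b := by
        have : ((⟨i, hIA hi⟩ : A) - ⟨a, haA⟩ : A) = (⟨i - a, A.sub_mem (hIA hi) haA⟩ : A) := rfl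
        rw [this]
        show i - a = -b
        rw [← hib]; abel
      have h2 : (((⟨i, hIA hi⟩ : A) - ⟨a, haA⟩ : A) : Q) ∈ B := by
        rw [hv]; exact B.neg_mem hb
      exact h2
  let h : ℕ →o (Submodule Qᵐᵒᵖ (A ⧸ B'))ᵒᵈ :=
    ⟨fun k => Submodule.map B'.mkQ (Submodule.comap A.subtype (g k)), by
      intro k l hkl
      exact Submodule.map_mono (Submodule.comap_mono (hga hkl))⟩
  obtain ⟨N, hN⟩ := (monotone_stabilizes_iff_artinian.mpr hart) h
  refine ⟨N, fun k hk => ?_⟩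
  refine le_antisymm (hga hk) ?_
  intro x hxN
  have hxA : x ∈ A := hg2 N hxN
  have hNk : Submodule.map B'.mkQ (Submodule.comap A.subtype (g N)) =
      Submodule.map B'.mkQ (Submodule.comap A.subtype (g k)) := hN k hk
  have hmk : Submodule.Quotient.mk (⟨x, hxA⟩ : A) ∈
      Submodule.map B'.mkQ (Submodule.comap A.subtype (g N)) :=
    Submodule.mem_map.mpr ⟨⟨x, hxA⟩, hxN, rfl⟩
  rw [hNk] at hmk
  obtain ⟨u, hu, hux⟩ := Submodule.mem_map.mp hmk
  have hu' : (u : Q) ∈ g k := hu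
  have hsub : ((u - ⟨x, hxA⟩ : A) : Q) ∈ B := by
    have h3 : u - ⟨x, hxA⟩ ∈ B' := (Submodule.Quotient.eq B').mp hux
    exact h3
  have hxB : (u : Q) - x ∈ g k := hg1 k hsub
  have : x = (u : Q) - ((u : Q) - x) := by abel
  rw [this]
  exact (g k).sub_mem hu' hxB

lemma stab_mod_Kpow (hss : IsSemisimpleRing J.ringCon.Quotient) :
    ∀ (m : ℕ) (g : ℕ → Submodule Qᵐᵒᵖ Q), (∀ k, (g k).FG) → Antitone g →
    ∃ N, ∀ k, N ≤ k → g k ⊔ KpowJ J m = g N ⊔ KpowJ J m := by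
  intro m
  induction m with
  | zero =>
    intro g _ _
    exact ⟨0, fun k _ => by rw [KpowJ_zero, sup_top_eq, sup_top_eq]⟩
  | succ m ih =>
    intro g hfg hga
    obtain ⟨N, hN⟩ := ih g hfg hga
    have hdec : ∀ k, N ≤ k → g N ≤ g k ⊔ (KpowJ J m ⊓ g N) := by
      intro k hk
      have h1 : g N ≤ g k ⊔ KpowJ J m := by
        calc g N ≤ g N ⊔ KpowJ J m := le_sup_left
        _ = g k ⊔ KpowJ J m := (hN k hk).symm
      have h2 : (g k ⊔ KpowJ J m) ⊓ g N = g k ⊔ (KpowJ J m ⊓ g N) :=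
        sup_inf_assoc_of_le _ (hga hk)
      intro x hx
      rw [← h2]
      exact ⟨h1 hx, hx⟩
    have hB : ∀ k, N ≤ k → mulJ J (g N) ≤ g k ⊔ KpowJ J (m + 1) := by
      intro k hk
      apply Submodule.span_le.mpr
      rintro z ⟨x, hx, y, hy, rfl⟩
      obtain ⟨a, ha, b, hb, hab⟩ := Submodule.mem_sup.mp (hdec k hk hx)
      rw [← hab, add_mul]
      apply Submodule.add_mem
      · exact Submodule.mem_sup_left ((g k).smul_mem (op y) ha)
      · exact Submodule.mem_sup_right (mul_mem_KpowJ J hb.1 hy)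
    obtain ⟨N', hN'⟩ := stab_chain J hss (g N ⊔ KpowJ J (m + 1))
      (mulJ J (g N) ⊔ KpowJ J (m + 1)) (g N) (hfg N) le_sup_left
      (sup_le_sup_left le_sup_right _)
      (by
        intro x hx y hy
        obtain ⟨a, ha, b, hb, hab⟩ := Submodule.mem_sup.mp hx
        rw [← hab, add_mul]
        exact Submodule.add_mem _
          (Submodule.mem_sup_left (mem_mulJ J ha hy))
          (Submodule.mem_sup_right ((KpowJ J (m + 1)).smul_mem (op y) hb)))
      (fun k => g (N + k) ⊔ KpowJ J (m + 1))
      (fun k l hkl => sup_le_sup_right (hga (by omega)) _)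
      (fun k => sup_le (hB (N + k) (by omega)) le_sup_right)
      (fun k => sup_le_sup_right (hga (by omega)) _)
    refine ⟨N + N', fun k hk => ?_⟩
    have e1 : g k ⊔ KpowJ J (m + 1) = g (N + (k - N)) ⊔ KpowJ J (m + 1) := by
      rw [Nat.add_sub_cancel' (by omega : N ≤ k)]
    rw [e1, hN' (k - N) (by omega)]

end Stab

/-- A ring is semiprimary if its Jacobson radical `J` is nilpotent and `R/J` is
semisimple Artinian. -/
def IsSemiprimaryRing' (R : Type*) [Ring R] : Prop :=
  (∃ n : ℕ, ∀ x : Fin n → R, (∀ i, x i ∈ (⊥ : TwoSidedIdeal R).jacobson) →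
      (List.ofFn x).prod = 0) ∧
    IsSemisimpleRing ((⊥ : TwoSidedIdeal R).jacobson).ringCon.Quotient

/-- A semiprimary ring satisfies the descending chain condition on finitely generated
right ideals; in particular it has a simple right ideal. Right ideals are submodules
of `Q` viewed as a right module over itself, i.e. as a module over `Qᵐᵒᵖ`. -/
theorem semiprimary_dcc_fg_right_ideals_and_simple_right_ideal
    {Q : Type*} [Ring Q] [Nontrivial Q] (hsp : IsSemiprimaryRing' Q) :
    (∀ f : ℕ → Submodule Qᵐᵒᵖ Q, (∀ n, (f n).FG) → Antitone f →
        ∃ N, ∀ n, N ≤ n → f n = f N) ∧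
      ∃ I : Submodule Qᵐᵒᵖ Q, I ≠ ⊥ ∧ ∀ J : Submodule Qᵐᵒᵖ Q, J ≤ I → J = ⊥ ∨ J = I := by
  obtain ⟨⟨n, hn⟩, hss⟩ := hsp
  set Jrad := (⊥ : TwoSidedIdeal Q).jacobson with hJrad
  have hKbot : KpowJ Jrad n = ⊥ := KpowJ_eq_bot Jrad hn
  have dcc : ∀ f : ℕ → Submodule Qᵐᵒᵖ Q, (∀ k, (f k).FG) → Antitone f →
      ∃ N, ∀ k, N ≤ k → f k = f N := by
    intro f hfg hfa
    obtain ⟨N, hN⟩ := stab_mod_Kpow Jrad hss n f hfg hfa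
    refine ⟨N, fun k hk => ?_⟩
    have := hN k hk
    rwa [hKbot, sup_bot_eq, sup_bot_eq] at this
  refine ⟨dcc, ?_⟩
  by_contra hno
  push_neg at hno
  have step : ∀ I : Submodule Qᵐᵒᵖ Q, I.FG → I ≠ ⊥ →
      ∃ I' : Submodule Qᵐᵒᵖ Q, I'.FG ∧ I' ≠ ⊥ ∧ I' < I := by
    intro I hIfg hI0
    obtain ⟨K, hKI, hKall⟩ := hno I hI0
    obtain ⟨x, hxK, hx0⟩ := Submodule.exists_mem_ne_zero_of_ne_bot hKall.1
    refine ⟨Submodule.span Qᵐᵒᵖ {x}, Submodule.fg_span_singleton x, ?_, ?_⟩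
    · intro hbot
      exact hx0 ((Submodule.mem_bot Qᵐᵒᵖ).mp
        (hbot ▸ Submodule.mem_span_singleton_self x))
    · refine lt_of_le_of_ne (le_trans (Submodule.span_le.mpr (by simpa using hxK)) hKI) ?_
      intro heq
      exact hKall.2 (le_antisymm hKI (heq ▸ Submodule.span_le.mpr (by simpa using hxK)))
  have htopfg : (⊤ : Submodule Qᵐᵒᵖ Q).FG := by
    refine ⟨{1}, ?_⟩
    rw [Finset.coe_singleton, eq_top_iff]
    intro q _
    have hq : q = op q • (1 : Q) := by rw [op_smul_eq_mul, one_mul]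
    rw [hq]
    exact Submodule.smul_mem _ _ (Submodule.mem_span_singleton_self 1)
  have htopne : (⊤ : Submodule Qᵐᵒᵖ Q) ≠ ⊥ := by
    intro hbot
    have h1 : (1 : Q) ∈ (⊥ : Submodule Qᵐᵒᵖ Q) := hbot ▸ Submodule.mem_top
    exact one_ne_zero ((Submodule.mem_bot Qᵐᵒᵖ).mp h1)
  choose F hF1 hF2 hF3 using step
  let T := {I : Submodule Qᵐᵒᵖ Q // I.FG ∧ I ≠ ⊥}
  let nxt : T → T := fun I => ⟨F I.1 I.2.1 I.2.2, hF1 _ _ _, hF2 _ _ _⟩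
  let seq : ℕ → T := fun k => nxt^[k] ⟨⊤, htopfg, htopne⟩
  have hstep : ∀ k, (seq (k + 1)).1 < (seq k).1 := by
    intro k
    have : seq (k + 1) = nxt (seq k) := Function.iterate_succ_apply' nxt k _
    rw [this]
    exact hF3 _ _ _
  have hanti : Antitone fun k => (seq k).1 :=
    antitone_nat_of_succ_le fun k => (hstep k).le
  obtain ⟨N, hN⟩ := dcc (fun k => (seq k).1) (fun k => (seq k).2.1) hanti
  exact (hstep N).ne (hN (N + 1) (by omega))
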